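/- Let S be a real symmetric n×n matrix whose largest eigenvalue λ₁ is strictly greater than its second-largest eigenvalue, and let v be a unit eigenvector of S for λ₁. Then for any real symmetric n×n matrix T, the function η ↦ λ_max(S + ηT) is differentiable at η = 0 with derivative vᵀ T v; equivalently, λ_max(S + ηT) = λ₁ + η · (vᵀ T v) + o(η) as η → 0. -/

import Mathlib

open Matrix

/-- The largest eigenvalue of a real (symmetric) matrix, via the variational
(Rayleigh quotient) characterization: the supremum of `vᵀ S v` over unit vectors `v`. -/
noncomputable def lambdaMax {n : ℕ} (S : Matrix (Fin n) (Fin n) ℝ) : ℝ :=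
  ⨆ v : { v : Fin n → ℝ // v ⬝ᵥ v = 1 }, (v : Fin n → ℝ) ⬝ᵥ S.mulVec (v : Fin n → ℝ)

section Aux

variable {n : ℕ}

lemma myDotParseval {S : Matrix (Fin n) (Fin n) ℝ} (hS : S.IsHermitian) (x y : Fin n → ℝ) :
    x ⬝ᵥ y = ∑ i, ((⇑(hS.eigenvectorBasis i) : Fin n → ℝ) ⬝ᵥ x) *
      ((⇑(hS.eigenvectorBasis i) : Fin n → ℝ) ⬝ᵥ y) := by
  have h := (hS.eigenvectorBasis).sum_inner_mul_inner
    ((WithLp.equiv 2 (Fin n → ℝ)).symm x) ((WithLp.equiv 2 (Fin n → ℝ)).symm y)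
  simp only [EuclideanSpace.inner_eq_star_dotProduct, star_trivial,
    Equiv.apply_symm_apply, WithLp.equiv_symm_apply, WithLp.ofLp_toLp] at h
  rw [dotProduct_comm x y, ← h]
  apply Finset.sum_congr rfl
  intro i _
  congr 1
  exact dotProduct_comm _ _

lemma mySymmDot {S : Matrix (Fin n) (Fin n) ℝ} (hS : S.IsHermitian) (x y : Fin n → ℝ) :
    x ⬝ᵥ (S *ᵥ y) = (S *ᵥ x) ⬝ᵥ y := by
  have hsymm : Sᵀ = S := by
    have h2 := hS
    unfold Matrix.IsHermitian at h2
    simpa [Matrix.conjTranspose_eq_transpose_of_trivial] using h2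
  rw [dotProduct_mulVec, ← mulVec_transpose, hsymm]

lemma myQuadParseval {S : Matrix (Fin n) (Fin n) ℝ} (hS : S.IsHermitian) (x y : Fin n → ℝ) :
    x ⬝ᵥ (S *ᵥ y) = ∑ i, hS.eigenvalues i *
      (((⇑(hS.eigenvectorBasis i) : Fin n → ℝ) ⬝ᵥ x) *
       ((⇑(hS.eigenvectorBasis i) : Fin n → ℝ) ⬝ᵥ y)) := by
  rw [myDotParseval hS x (S *ᵥ y)]
  apply Finset.sum_congr rfl
  intro i _
  rw [mySymmDot hS _ y, hS.mulVec_eigenvectorBasis, smul_dotProduct]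
  simp [smul_eq_mul]
  ring

lemma myEntry (x : Fin n → ℝ) (i : Fin n) : |x i| ≤ Real.sqrt (x ⬝ᵥ x) := by
  rw [← Real.sqrt_sq_eq_abs]
  apply Real.sqrt_le_sqrt
  have hx : x ⬝ᵥ x = ∑ j, x j ^ 2 := by simp [dotProduct, sq]
  rw [hx]
  exact Finset.single_le_sum (fun j _ => sq_nonneg (x j)) (Finset.mem_univ i)

lemma myBilinBound (T : Matrix (Fin n) (Fin n) ℝ) (y z : Fin n → ℝ) (a b : ℝ)
    (ha0 : 0 ≤ a) (hb0 : 0 ≤ b) (ha : ∀ i, |y i| ≤ a) (hb : ∀ j, |z j| ≤ b) :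
    |y ⬝ᵥ T *ᵥ z| ≤ (∑ i, ∑ j, |T i j|) * (a * b) := by
  calc |y ⬝ᵥ T *ᵥ z| = |∑ i, y i * ∑ j, T i j * z j| := rfl
    _ ≤ ∑ i, |y i * ∑ j, T i j * z j| := Finset.abs_sum_le_sum_abs _ _
    _ ≤ ∑ i, a * ∑ j, |T i j| * b := by
        apply Finset.sum_le_sum; intro i _
        rw [abs_mul]
        apply mul_le_mul (ha i) ?_ (abs_nonneg _) ha0
        calc |∑ j, T i j * z j| ≤ ∑ j, |T i j * z j| := Finset.abs_sum_le_sum_abs _ _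
          _ ≤ ∑ j, |T i j| * b := Finset.sum_le_sum fun j _ => by
              rw [abs_mul]; exact mul_le_mul_of_nonneg_left (hb j) (abs_nonneg _)
    _ = (∑ i, ∑ j, |T i j|) * (a * b) := by
        rw [Finset.sum_mul]; apply Finset.sum_congr rfl; intro i _
        rw [Finset.mul_sum, Finset.sum_mul]
        apply Finset.sum_congr rfl; intro j _; ring

lemma myGap {S : Matrix (Fin n) (Fin n) ℝ} (hS : S.IsHermitian) (lam₁ δ : ℝ) (hδpos : 0 < δ)
    (i₀ : Fin n) (hδle : ∀ i, i ≠ i₀ → hS.eigenvalues i ≤ lam₁ - δ)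
    (hi₀ : hS.eigenvalues i₀ = lam₁)
    (v : Fin n → ℝ) (hv : v ⬝ᵥ v = 1) (hSv : S *ᵥ v = lam₁ • v)
    (x : Fin n → ℝ) (hx : x ⬝ᵥ x = 1) :
    x ⬝ᵥ (S *ᵥ x) ≤ lam₁ - δ * (1 - (v ⬝ᵥ x)^2) ∧ (v ⬝ᵥ x)^2 ≤ 1 := by
  classical
  set e : Fin n → (Fin n → ℝ) := fun i => ⇑(hS.eigenvectorBasis i) with he
  set d : Fin n → ℝ := fun i => e i ⬝ᵥ v with hdd
  set cc : Fin n → ℝ := fun i => e i ⬝ᵥ x with hcc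
  have hd : ∀ i, i ≠ i₀ → d i = 0 := by
    intro i hi
    have h1 : e i ⬝ᵥ (S *ᵥ v) = lam₁ * d i := by
      rw [hSv, dotProduct_smul]; simp [hdd, smul_eq_mul]
    have h2 : e i ⬝ᵥ (S *ᵥ v) = hS.eigenvalues i * d i := by
      rw [mySymmDot hS, he, hS.mulVec_eigenvectorBasis, smul_dotProduct]
      simp [hdd, he, smul_eq_mul]
    have h3 : (hS.eigenvalues i - lam₁) * d i = 0 := by linear_combination h1 - h2
    have h4 : hS.eigenvalues i - lam₁ ≠ 0 := by
      have := hδle i hi; intro hcon; nlinarith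
    exact (mul_eq_zero.mp h3).resolve_left h4
  have hsum_d : ∑ i, d i * d i = 1 := by
    have := myDotParseval hS v v
    rw [hv] at this
    exact this.symm
  have hd0 : d i₀ * d i₀ = 1 := by
    rw [← hsum_d]
    exact (Finset.sum_eq_single (f := fun i => d i * d i) i₀
      (fun i _ hi => by show d i * d i = 0; rw [hd i hi]; ring)
      (fun h => absurd (Finset.mem_univ i₀) h)).symm
  have hvx : v ⬝ᵥ x = d i₀ * cc i₀ := by
    rw [myDotParseval hS v x]
    exact Finset.sum_eq_single (f := fun i => d i * cc i) i₀
      (fun i _ hi => by show d i * cc i = 0; rw [hd i hi]; ring)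
      (fun h => absurd (Finset.mem_univ i₀) h)
  have hvx2 : (v ⬝ᵥ x)^2 = cc i₀ * cc i₀ := by
    rw [hvx]; linear_combination (cc i₀ * cc i₀) * hd0
  have hsum_c : ∑ i, cc i * cc i = 1 := by
    have := myDotParseval hS x x
    rw [hx] at this
    exact this.symm
  have hcc1 : cc i₀ * cc i₀ ≤ 1 := by
    rw [← hsum_c]
    exact Finset.single_le_sum (fun i _ => mul_self_nonneg (cc i)) (Finset.mem_univ i₀)
  refine ⟨?_, by rw [hvx2]; exact hcc1⟩
  have hexp : x ⬝ᵥ (S *ᵥ x) = ∑ i, hS.eigenvalues i * (cc i * cc i) := myQuadParseval hS x x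
  have hsplit : ∑ i ∈ Finset.univ.erase i₀, hS.eigenvalues i * (cc i * cc i)
      + hS.eigenvalues i₀ * (cc i₀ * cc i₀) = ∑ i, hS.eigenvalues i * (cc i * cc i) :=
    Finset.sum_erase_add _ _ (Finset.mem_univ i₀)
  have hsplit2 : ∑ i ∈ Finset.univ.erase i₀, cc i * cc i + cc i₀ * cc i₀
      = ∑ i, cc i * cc i :=
    Finset.sum_erase_add _ _ (Finset.mem_univ i₀)
  have hbound : ∑ i ∈ Finset.univ.erase i₀, hS.eigenvalues i * (cc i * cc i)
      ≤ ∑ i ∈ Finset.univ.erase i₀, (lam₁ - δ) * (cc i * cc i) :=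
    Finset.sum_le_sum fun i hi =>
      mul_le_mul_of_nonneg_right (hδle i (Finset.ne_of_mem_erase hi)) (mul_self_nonneg _)
  have heq : ∑ i ∈ Finset.univ.erase i₀, (lam₁ - δ) * (cc i * cc i)
      = (lam₁ - δ) * (1 - cc i₀ * cc i₀) := by
    rw [← Finset.mul_sum]
    congr 1
    linarith [hsplit2, hsum_c]
  rw [hi₀] at hsplit
  rw [hexp, hvx2]
  linarith [hbound, hsplit, heq]

end Aux

set_option maxHeartbeats 2000000 in
/-- If the largest eigenvalue `λ₁` of a real symmetric matrix `S` is simple (strictly greater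
than the second-largest eigenvalue), with unit eigenvector `v`, then for any symmetric `T`
the map `η ↦ λ_max(S + ηT)` is differentiable at `η = 0` with derivative `vᵀ T v`. -/
theorem lambdaMax_hasDerivAt_of_simple_top_eigenvalue
    {n : ℕ} (S T : Matrix (Fin n) (Fin n) ℝ)
    (hS : S.IsHermitian) (hT : T.IsHermitian) (lam₁ : ℝ)
    (v : Fin n → ℝ) (hv : v ⬝ᵥ v = 1) (hSv : S.mulVec v = lam₁ • v)
    (hsimple : ∃ i₀ : Fin n, hS.eigenvalues i₀ = lam₁ ∧
      ∀ i : Fin n, i ≠ i₀ → hS.eigenvalues i < lam₁) :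
    HasDerivAt (fun η : ℝ => lambdaMax (S + η • T)) (v ⬝ᵥ T.mulVec v) 0 := by
  classical
  obtain ⟨i₀, hi₀, hlt⟩ := hsimple
  have hne : (Finset.univ : Finset (Fin n)).Nonempty := ⟨i₀, Finset.mem_univ i₀⟩
  set δ : ℝ := Finset.univ.inf' hne (fun i => if i = i₀ then 1 else lam₁ - hS.eigenvalues i)
    with hδdef
  have hδpos : 0 < δ := by
    rw [hδdef, Finset.lt_inf'_iff]
    intro i _
    by_cases h : i = i₀
    · simp [h]
    · simp only [h, if_false]
      linarith [hlt i h]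
  have hδle : ∀ i, i ≠ i₀ → hS.eigenvalues i ≤ lam₁ - δ := by
    intro i hi
    have hle := Finset.inf'_le (fun i => if i = i₀ then 1 else lam₁ - hS.eigenvalues i)
      (Finset.mem_univ i)
    rw [if_neg hi] at hle
    rw [← hδdef] at hle
    linarith
  set c : ℝ := v ⬝ᵥ T.mulVec v with hc
  set cT : ℝ := ∑ i, ∑ j, |T i j| with hcT
  have hcT0 : 0 ≤ cT := Finset.sum_nonneg fun i _ => Finset.sum_nonneg fun j _ => abs_nonneg _
  set C : ℝ := 4 * cT^2 / δ with hC
  have hC0 : 0 ≤ C := by positivity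
  -- key pointwise bound
  have key : ∀ η : ℝ, ∀ x : Fin n → ℝ, x ⬝ᵥ x = 1 →
      x ⬝ᵥ ((S + η • T) *ᵥ x) ≤ lam₁ + η * c + C * η^2 := by
    intro η x hx
    obtain ⟨hgap, hα2⟩ := myGap hS lam₁ δ hδpos i₀ hδle hi₀ v hv hSv x hx
    set α : ℝ := v ⬝ᵥ x with hαdef
    set w : Fin n → ℝ := x - α • v with hw
    have hx_decomp : x = α • v + w := by rw [hw]; abel
    have hww : w ⬝ᵥ w = 1 - α^2 := by
      rw [hw]
      simp only [sub_dotProduct, dotProduct_sub, smul_dotProduct, dotProduct_smul,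
        smul_eq_mul, hx, hv]
      rw [dotProduct_comm x v, ← hαdef]
      ring
    set s : ℝ := Real.sqrt (1 - α^2) with hs
    have hs0 : 0 ≤ s := Real.sqrt_nonneg _
    have hs2 : s^2 = 1 - α^2 := Real.sq_sqrt (by nlinarith)
    have hs1 : s ≤ 1 := Real.sqrt_le_one.mpr (by nlinarith)
    have hα1 : |α| ≤ 1 := by
      rw [abs_le]; constructor <;> nlinarith
    have hvent : ∀ i, |v i| ≤ 1 := fun i => by
      have h := myEntry v i; rwa [hv, Real.sqrt_one] at h
    have hwent : ∀ i, |w i| ≤ s := fun i => by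
      have h := myEntry w i; rwa [hww] at h
    have h1 : |v ⬝ᵥ T *ᵥ w| ≤ cT * (1 * s) :=
      myBilinBound T v w 1 s zero_le_one hs0 hvent hwent
    have h2 : |w ⬝ᵥ T *ᵥ v| ≤ cT * (s * 1) :=
      myBilinBound T w v s 1 hs0 zero_le_one hwent hvent
    have h3 : |w ⬝ᵥ T *ᵥ w| ≤ cT * (s * s) :=
      myBilinBound T w w s s hs0 hs0 hwent hwent
    have h4 : |c| ≤ cT * (1 * 1) :=
      myBilinBound T v v 1 1 zero_le_one zero_le_one hvent hvent
    set p : ℝ := v ⬝ᵥ T *ᵥ w with hp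
    set q : ℝ := w ⬝ᵥ T *ᵥ v with hq
    set r : ℝ := w ⬝ᵥ T *ᵥ w with hr
    have hxTx : x ⬝ᵥ T *ᵥ x = α^2 * c + α * p + α * q + r := by
      rw [hx_decomp]
      simp only [add_dotProduct, smul_dotProduct, mulVec_add, mulVec_smul,
        dotProduct_add, dotProduct_smul, smul_eq_mul]
      rw [hc, hp, hq, hr]
      ring
    have hsplit : x ⬝ᵥ ((S + η • T) *ᵥ x) = x ⬝ᵥ (S *ᵥ x) + η * (x ⬝ᵥ T *ᵥ x) := by
      rw [add_mulVec, dotProduct_add, smul_mulVec, dotProduct_smul, smul_eq_mul]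
    clear_value p q r s w α c cT C δ
    have hX : |(α^2 - 1) * c + α * p + α * q + r| ≤ 4 * cT * s := by
      have e1 : |(α^2 - 1) * c| ≤ s^2 * cT := by
        rw [abs_mul]
        have : |α^2 - 1| = s^2 := by rw [abs_of_nonpos (by nlinarith)]; linarith [hs2]
        rw [this]
        have hcle : |c| ≤ cT := by linarith [h4]
        exact mul_le_mul_of_nonneg_left hcle (sq_nonneg s)
      have e2 : |α * p| ≤ cT * s := by
        rw [abs_mul]
        calc |α| * |p| ≤ 1 * (cT * (1 * s)) :=
              mul_le_mul hα1 h1 (abs_nonneg _) zero_le_one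
          _ = cT * s := by ring
      have e3 : |α * q| ≤ cT * s := by
        rw [abs_mul]
        calc |α| * |q| ≤ 1 * (cT * (s * 1)) :=
              mul_le_mul hα1 h2 (abs_nonneg _) zero_le_one
          _ = cT * s := by ring
      have e4 : |r| ≤ cT * s^2 := by rw [sq]; linarith [h3]
      have hss : s^2 ≤ s := by
        have h5 : s * s ≤ 1 * s := mul_le_mul_of_nonneg_right hs1 hs0
        rw [sq]; linarith
      calc |(α^2 - 1) * c + α * p + α * q + r|
          ≤ |(α^2 - 1) * c + α * p + α * q| + |r| := abs_add_le _ _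
        _ ≤ (|(α^2 - 1) * c + α * p| + |α * q|) + |r| := by linarith [abs_add_le ((α^2-1)*c + α*p) (α*q)]
        _ ≤ ((|(α^2 - 1) * c| + |α * p|) + |α * q|) + |r| := by
            linarith [abs_add_le ((α^2-1)*c) (α*p)]
        _ ≤ 4 * cT * s := by
            have h6 : cT * s^2 ≤ cT * s := mul_le_mul_of_nonneg_left hss hcT0
            have h7 : s^2 * cT ≤ cT * s := by linarith [h6]
            linarith [e1, e2, e3, e4, h6, h7]
    have hstep : η * ((α^2 - 1) * c + α * p + α * q + r) ≤ |η| * (4 * cT * s) := by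
      calc η * ((α^2 - 1) * c + α * p + α * q + r)
          ≤ |η * ((α^2 - 1) * c + α * p + α * q + r)| := le_abs_self _
        _ = |η| * |(α^2 - 1) * c + α * p + α * q + r| := abs_mul _ _
        _ ≤ |η| * (4 * cT * s) := mul_le_mul_of_nonneg_left hX (abs_nonneg _)
    have hquad : |η| * (4 * cT * s) - δ * s^2 ≤ C * η^2 := by
      have hsq := sq_nonneg (2 * cT * |η| - δ * s)
      have h9 : C * δ = 4 * cT^2 := by
        rw [hC]; exact div_mul_cancel₀ _ (ne_of_gt hδpos)
      have hCδ : δ * (C * η^2) = 4 * cT^2 * η^2 := by linear_combination η^2 * h9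
      have h8 : δ * (4 * cT * s * |η| - δ * s^2) ≤ δ * (C * η^2) := by
        rw [hCδ]
        nlinarith [hsq, sq_abs η]
      have h10 := (mul_le_mul_iff_right₀ hδpos).mp h8
      linarith
    rw [hsplit, hxTx]
    have hfin : x ⬝ᵥ (S *ᵥ x) + η * (α^2 * c + α * p + α * q + r)
        = x ⬝ᵥ (S *ᵥ x) + η * c + η * ((α^2 - 1) * c + α * p + α * q + r) := by ring
    rw [hfin]
    have hgap' : x ⬝ᵥ (S *ᵥ x) ≤ lam₁ - δ * s^2 := by rw [hs2]; exact hgap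
    linarith [hstep, hquad, hgap']
  haveI : Nonempty { x : Fin n → ℝ // x ⬝ᵥ x = 1 } := ⟨⟨v, hv⟩⟩
  have upper : ∀ η : ℝ, lambdaMax (S + η • T) ≤ lam₁ + η * c + C * η^2 := by
    intro η
    unfold lambdaMax
    exact ciSup_le fun x => key η x x.2
  have bdd : ∀ η : ℝ, BddAbove (Set.range fun x : { x : Fin n → ℝ // x ⬝ᵥ x = 1 } =>
      (x : Fin n → ℝ) ⬝ᵥ (S + η • T) *ᵥ (x : Fin n → ℝ)) := by
    intro η
    refine ⟨lam₁ + η * c + C * η^2, ?_⟩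
    rintro _ ⟨x, rfl⟩
    exact key η x x.2
  have hvval : ∀ η : ℝ, v ⬝ᵥ ((S + η • T) *ᵥ v) = lam₁ + η * c := by
    intro η
    rw [add_mulVec, dotProduct_add, smul_mulVec, dotProduct_smul, smul_eq_mul,
      hSv, dotProduct_smul, smul_eq_mul, hv]
    ring
  have lower : ∀ η : ℝ, lam₁ + η * c ≤ lambdaMax (S + η • T) := by
    intro η
    have h := le_ciSup (bdd η) ⟨v, hv⟩
    rw [hvval η] at h
    exact h
  have hf0 : lambdaMax (S + (0:ℝ) • T) = lam₁ := by
    have h1 := upper 0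
    have h2 := lower 0
    simp only [zero_mul, mul_zero, add_zero, ne_eq, OfNat.ofNat_ne_zero,
      not_false_eq_true, zero_pow] at h1 h2
    linarith
  rw [hasDerivAt_iff_isLittleO]
  have hbig : (fun η : ℝ => lambdaMax (S + η • T) - lam₁ - η * c) =O[nhds 0]
      (fun η : ℝ => η^2) := by
    apply Asymptotics.IsBigO.of_bound C
    apply Filter.Eventually.of_forall
    intro η
    rw [Real.norm_eq_abs, Real.norm_eq_abs]
    have h1 := upper η
    have h2 := lower η
    rw [abs_le]
    constructor
    · rw [abs_of_nonneg (sq_nonneg η)]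
      nlinarith [sq_nonneg η]
    · rw [abs_of_nonneg (sq_nonneg η)]
      linarith
  have hlit : (fun η : ℝ => η^2) =o[nhds 0] (fun η : ℝ => η) :=
    Asymptotics.isLittleO_pow_id one_lt_two
  simp only [hf0, sub_zero, smul_eq_mul]
  exact hbig.trans_isLittleO hlit
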